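/- Let G be a simple graph with no isolated vertices, maximum degree Δ and minimum degree δ, let p ≠ 0 be a real number, let ξ_1 be the largest eigenvalue of the p-Sombor matrix S_p(G) and μ_1 the largest eigenvalue of the adjacency matrix A(G). Then 2^{1/p} δ μ_1 ≤ ξ_1 ≤ 2^{1/p} Δ μ_1, with equality in either bound if G is a regular graph. -/

import Mathlib

open Finset

/-- The `p`-Sombor matrix of a simple graph `G` on vertices `{0, …, n-1}`:
its `(i,j)` entry is `((d i)^p + (d j)^p)^(1/p)` when `i ~ j`, and `0` otherwise. -/
noncomputable def somborMatrix (n : ℕ) (G : SimpleGraph (Fin n)) [DecidableRel G.Adj]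
    (p : ℝ) : Matrix (Fin n) (Fin n) ℝ :=
  Matrix.of fun i j =>
    if G.Adj i j then ((G.degree i : ℝ) ^ p + (G.degree j : ℝ) ^ p) ^ (1 / p) else 0

/-- Sum of a symmetric weight `f` over the edges of `G`
(each unordered edge counted once). -/
noncomputable def edgeSum (n : ℕ) (G : SimpleGraph (Fin n)) [DecidableRel G.Adj]
    (f : Fin n → Fin n → ℝ) : ℝ :=
  (1 / 2) * ∑ i, ∑ j, if G.Adj i j then f i j else 0

/-- The `p`-Sombor index `SO_p(G) = ∑_{ij ∈ E(G)} ((d i)^p + (d j)^p)^(1/p)`. -/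
noncomputable def somborIndex (n : ℕ) (G : SimpleGraph (Fin n)) [DecidableRel G.Adj]
    (p : ℝ) : ℝ :=
  edgeSum n G fun i j => ((G.degree i : ℝ) ^ p + (G.degree j : ℝ) ^ p) ^ (1 / p)



open Finset Matrix

local notation "⟪" x ", " y "⟫" => @inner ℝ _ _ x y

lemma myInner_eq_dot {n : ℕ} (x y : EuclideanSpace ℝ (Fin n)) :
    ⟪x, y⟫ = (x : Fin n → ℝ) ⬝ᵥ (y : Fin n → ℝ) := by
  simp [PiLp.inner_apply, dotProduct, mul_comm]

lemma myQuadForm_expand {n : ℕ} (M : Matrix (Fin n) (Fin n) ℝ) (x : Fin n → ℝ) :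
    x ⬝ᵥ M *ᵥ x = ∑ i, ∑ j, x i * (M i j * x j) := by
  simp [dotProduct, Matrix.mulVec, Finset.mul_sum]

lemma myRayleigh_le {n : ℕ} (M : Matrix (Fin n) (Fin n) ℝ) (hM : M.IsHermitian) {ξ : ℝ}
    (h : ∀ i, hM.eigenvalues i ≤ ξ) (x : Fin n → ℝ) :
    x ⬝ᵥ M *ᵥ x ≤ ξ * (x ⬝ᵥ x) := by
  set b := hM.eigenvectorBasis with hb
  set y : EuclideanSpace ℝ (Fin n) := WithLp.toLp 2 x with hy
  have hsym : Mᵀ = M := by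
    rw [← Matrix.conjTranspose_eq_transpose_of_trivial]; exact hM
  have key : ∀ i, ⟪b i, (WithLp.toLp 2 (M *ᵥ x) : EuclideanSpace ℝ (Fin n))⟫ =
      hM.eigenvalues i * ⟪b i, y⟫ := by
    intro i
    rw [myInner_eq_dot, myInner_eq_dot]
    show (⇑(b i)) ⬝ᵥ (M *ᵥ x) = hM.eigenvalues i * ((⇑(b i)) ⬝ᵥ x)
    have h2 : (⇑(b i)) ᵥ* M = M *ᵥ (⇑(b i)) := by
      have h3 := Matrix.vecMul_transpose M (⇑(b i))
      rwa [hsym] at h3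
    rw [Matrix.dotProduct_mulVec, h2, hM.mulVec_eigenvectorBasis i]
    simp [smul_dotProduct, hb]
  have expand : ⟪y, (WithLp.toLp 2 (M *ᵥ x) : EuclideanSpace ℝ (Fin n))⟫ =
      ∑ i, hM.eigenvalues i * (⟪b i, y⟫ * ⟪b i, y⟫) := by
    rw [← b.sum_inner_mul_inner y (WithLp.toLp 2 (M *ᵥ x) : EuclideanSpace ℝ (Fin n))]
    refine Finset.sum_congr rfl fun i _ => ?_
    rw [key i, real_inner_comm y (b i)]
    ring
  have parseval : ∑ i, ⟪b i, y⟫ * ⟪b i, y⟫ = x ⬝ᵥ x := by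
    have := b.sum_inner_mul_inner y y
    rw [myInner_eq_dot y y] at this
    rw [← this]
    refine Finset.sum_congr rfl fun i _ => ?_
    rw [real_inner_comm y (b i)]
  have hxy : x ⬝ᵥ M *ᵥ x = ⟪y, (WithLp.toLp 2 (M *ᵥ x) : EuclideanSpace ℝ (Fin n))⟫ :=
    (myInner_eq_dot y (WithLp.toLp 2 (M *ᵥ x) : EuclideanSpace ℝ (Fin n))).symm
  rw [hxy, expand, ← parseval, Finset.mul_sum]
  refine Finset.sum_le_sum fun i _ => ?_
  exact mul_le_mul_of_nonneg_right (h i) (mul_self_nonneg _)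

lemma myEig_self {n : ℕ} (M : Matrix (Fin n) (Fin n) ℝ) (hM : M.IsHermitian) (i : Fin n) :
    (⇑(hM.eigenvectorBasis i)) ⬝ᵥ M *ᵥ (⇑(hM.eigenvectorBasis i)) = hM.eigenvalues i ∧
    (⇑(hM.eigenvectorBasis i)) ⬝ᵥ (⇑(hM.eigenvectorBasis i)) = 1 := by
  have horth := hM.eigenvectorBasis.orthonormal
  rw [orthonormal_iff_ite] at horth
  have h1 : (⇑(hM.eigenvectorBasis i)) ⬝ᵥ (⇑(hM.eigenvectorBasis i)) = 1 := by
    have := horth i i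
    rw [myInner_eq_dot] at this
    simpa using this
  refine ⟨?_, h1⟩
  rw [hM.mulVec_eigenvectorBasis i]
  simp [dotProduct_smul, h1]

lemma myQuad_abs {n : ℕ} {M : Matrix (Fin n) (Fin n) ℝ} (hM : ∀ i j, 0 ≤ M i j)
    (x : Fin n → ℝ) :
    x ⬝ᵥ M *ᵥ x ≤ (fun i => |x i|) ⬝ᵥ M *ᵥ (fun i => |x i|) := by
  rw [myQuadForm_expand, myQuadForm_expand]
  refine Finset.sum_le_sum fun i _ => Finset.sum_le_sum fun j _ => ?_
  calc x i * (M i j * x j) ≤ |x i * (M i j * x j)| := le_abs_self _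
    _ = |x i| * (M i j * |x j|) := by
        rw [abs_mul, abs_mul, abs_of_nonneg (hM i j)]

lemma myQuad_mono {n : ℕ} {M N : Matrix (Fin n) (Fin n) ℝ} (h : ∀ i j, M i j ≤ N i j)
    {x : Fin n → ℝ} (hx : ∀ i, 0 ≤ x i) :
    x ⬝ᵥ M *ᵥ x ≤ x ⬝ᵥ N *ᵥ x := by
  rw [myQuadForm_expand, myQuadForm_expand]
  refine Finset.sum_le_sum fun i _ => Finset.sum_le_sum fun j _ => ?_
  exact mul_le_mul_of_nonneg_left (mul_le_mul_of_nonneg_right (h i j) (hx j)) (hx i)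

lemma mySombor_bounds (p : ℝ) (hp : p ≠ 0) {d1 d2 lo hi : ℝ} (hlo : 0 < lo)
    (h1lo : lo ≤ d1) (h2lo : lo ≤ d2) (h1hi : d1 ≤ hi) (h2hi : d2 ≤ hi) :
    (2 : ℝ) ^ (1 / p) * lo ≤ (d1 ^ p + d2 ^ p) ^ (1 / p) ∧
      (d1 ^ p + d2 ^ p) ^ (1 / p) ≤ (2 : ℝ) ^ (1 / p) * hi := by
  have h1 : (0:ℝ) < d1 := hlo.trans_le h1lo
  have h2 : (0:ℝ) < d2 := hlo.trans_le h2lo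
  have hhi : (0:ℝ) < hi := h1.trans_le h1hi
  have key : ∀ t : ℝ, 0 < t → ((2:ℝ) * t ^ p) ^ (1 / p) = (2:ℝ) ^ (1 / p) * t := by
    intro t ht
    rw [Real.mul_rpow (by norm_num) (Real.rpow_nonneg ht.le p),
      ← Real.rpow_mul ht.le, mul_one_div_cancel hp, Real.rpow_one]
  have hsum_pos : 0 < d1 ^ p + d2 ^ p :=
    add_pos (Real.rpow_pos_of_pos h1 p) (Real.rpow_pos_of_pos h2 p)
  rcases lt_or_gt_of_ne hp with hneg | hpos
  · have ha : d1 ^ p ≤ lo ^ p := Real.rpow_le_rpow_of_nonpos hlo h1lo hneg.le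
    have hb : d2 ^ p ≤ lo ^ p := Real.rpow_le_rpow_of_nonpos hlo h2lo hneg.le
    have hc : hi ^ p ≤ d1 ^ p := Real.rpow_le_rpow_of_nonpos h1 h1hi hneg.le
    have hd : hi ^ p ≤ d2 ^ p := Real.rpow_le_rpow_of_nonpos h2 h2hi hneg.le
    have hup : d1 ^ p + d2 ^ p ≤ 2 * lo ^ p := by linarith
    have hdn : 2 * hi ^ p ≤ d1 ^ p + d2 ^ p := by linarith
    have hip : 1 / p ≤ 0 := le_of_lt (one_div_neg.mpr hneg)
    constructor
    · have h := Real.rpow_le_rpow_of_nonpos hsum_pos hup hip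
      rwa [key lo hlo] at h
    · have h := Real.rpow_le_rpow_of_nonpos (by positivity) hdn hip
      rwa [key hi hhi] at h
  · have ha : lo ^ p ≤ d1 ^ p := Real.rpow_le_rpow hlo.le h1lo hpos.le
    have hb : lo ^ p ≤ d2 ^ p := Real.rpow_le_rpow hlo.le h2lo hpos.le
    have hc : d1 ^ p ≤ hi ^ p := Real.rpow_le_rpow h1.le h1hi hpos.le
    have hd : d2 ^ p ≤ hi ^ p := Real.rpow_le_rpow h2.le h2hi hpos.le
    have hup : 2 * lo ^ p ≤ d1 ^ p + d2 ^ p := by linarith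
    have hdn : d1 ^ p + d2 ^ p ≤ 2 * hi ^ p := by linarith
    have hip : 0 ≤ 1 / p := by positivity
    constructor
    · have h := Real.rpow_le_rpow (by positivity) hup hip
      rwa [key lo hlo] at h
    · have h := Real.rpow_le_rpow hsum_pos.le hdn hip
      rwa [key hi hhi] at h

/-- If `ξ₁` is the largest eigenvalue of the `p`-Sombor matrix and `μ₁` the
largest eigenvalue of the adjacency matrix, then `2^(1/p) δ μ₁ ≤ ξ₁ ≤ 2^(1/p) Δ μ₁`,
with equality in either bound if `G` is regular. -/
theorem somborMatrix_spectral_radius_vs_adjacency (n : ℕ) (G : SimpleGraph (Fin n))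
    [DecidableRel G.Adj] (hdeg : ∀ i : Fin n, 0 < G.degree i) (p : ℝ) (hp : p ≠ 0)
    (hS : (somborMatrix n G p).IsHermitian) (hA : (G.adjMatrix ℝ).IsHermitian)
    (ξ₁ μ₁ : ℝ)
    (hξmem : ∃ i, hS.eigenvalues i = ξ₁) (hξmax : ∀ i, hS.eigenvalues i ≤ ξ₁)
    (hμmem : ∃ i, hA.eigenvalues i = μ₁) (hμmax : ∀ i, hA.eigenvalues i ≤ μ₁) :
    ((2 : ℝ) ^ (1 / p) * (G.minDegree : ℝ) * μ₁ ≤ ξ₁ ∧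
        ξ₁ ≤ (2 : ℝ) ^ (1 / p) * (G.maxDegree : ℝ) * μ₁) ∧
      ((∃ k, G.IsRegularOfDegree k) →
        (2 : ℝ) ^ (1 / p) * (G.minDegree : ℝ) * μ₁ = ξ₁ ∧
          ξ₁ = (2 : ℝ) ^ (1 / p) * (G.maxDegree : ℝ) * μ₁) := by
  classical
  obtain ⟨i0, hi0⟩ := hξmem
  obtain ⟨j0, hj0⟩ := hμmem
  have hne : Nonempty (Fin n) := ⟨i0⟩
  set c : ℝ := (2 : ℝ) ^ (1 / p) with hc
  have hcpos : 0 < c := Real.rpow_pos_of_pos two_pos _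
  have hδpos : 0 < G.minDegree := by
    obtain ⟨v, hv⟩ := G.exists_minimal_degree_vertex
    rw [hv]; exact hdeg v
  have hΔnonneg : (0:ℝ) ≤ (G.maxDegree : ℝ) := Nat.cast_nonneg _
  have hδnonneg : (0:ℝ) ≤ (G.minDegree : ℝ) := Nat.cast_nonneg _
  have hbound : ∀ i j : Fin n, G.Adj i j →
      c * (G.minDegree : ℝ) ≤ somborMatrix n G p i j ∧
        somborMatrix n G p i j ≤ c * (G.maxDegree : ℝ) := by
    intro i j hij
    have hSij : somborMatrix n G p i j
        = ((G.degree i : ℝ) ^ p + (G.degree j : ℝ) ^ p) ^ (1 / p) := by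
      simp [somborMatrix, hij]
    rw [hSij]
    exact mySombor_bounds p hp (by exact_mod_cast hδpos)
      (by exact_mod_cast G.minDegree_le_degree i) (by exact_mod_cast G.minDegree_le_degree j)
      (by exact_mod_cast G.degree_le_maxDegree i) (by exact_mod_cast G.degree_le_maxDegree j)
  have hSzero : ∀ i j : Fin n, ¬ G.Adj i j → somborMatrix n G p i j = 0 := by
    intro i j hij; simp [somborMatrix, hij]
  have hSnonneg : ∀ i j, 0 ≤ somborMatrix n G p i j := by
    intro i j
    by_cases hij : G.Adj i j
    · exact le_trans (by positivity) (hbound i j hij).1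
    · rw [hSzero i j hij]
  have hAnonneg : ∀ i j, 0 ≤ (G.adjMatrix ℝ) i j := by
    intro i j; rw [SimpleGraph.adjMatrix_apply]; split <;> norm_num
  have hup : ∀ i j, somborMatrix n G p i j
      ≤ ((c * (G.maxDegree : ℝ)) • G.adjMatrix ℝ) i j := by
    intro i j
    rw [Matrix.smul_apply, SimpleGraph.adjMatrix_apply, smul_eq_mul]
    by_cases hij : G.Adj i j
    · rw [if_pos hij, mul_one]; exact (hbound i j hij).2
    · rw [if_neg hij, mul_zero, hSzero i j hij]
  have hlo : ∀ i j, ((c * (G.minDegree : ℝ)) • G.adjMatrix ℝ) i j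
      ≤ somborMatrix n G p i j := by
    intro i j
    rw [Matrix.smul_apply, SimpleGraph.adjMatrix_apply, smul_eq_mul]
    by_cases hij : G.Adj i j
    · rw [if_pos hij, mul_one]; exact (hbound i j hij).1
    · rw [if_neg hij, mul_zero, hSzero i j hij]
  have hsmul_quad : ∀ (a : ℝ) (x : Fin n → ℝ),
      x ⬝ᵥ (a • G.adjMatrix ℝ) *ᵥ x = a * (x ⬝ᵥ G.adjMatrix ℝ *ᵥ x) := by
    intro a x
    rw [Matrix.smul_mulVec, dotProduct_smul, smul_eq_mul]
  have habsdot : ∀ x : Fin n → ℝ,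
      (fun i => |x i|) ⬝ᵥ (fun i => |x i|) = x ⬝ᵥ x := by
    intro x; simp [dotProduct, abs_mul_abs_self]
  -- upper bound
  have hupper : ξ₁ ≤ c * (G.maxDegree : ℝ) * μ₁ := by
    obtain ⟨hq, hnorm⟩ := myEig_self _ hS i0
    set v : Fin n → ℝ := ⇑(hS.eigenvectorBasis i0) with hv
    set w : Fin n → ℝ := fun i => |v i| with hw
    have h1 : ξ₁ = v ⬝ᵥ somborMatrix n G p *ᵥ v := by rw [hq, hi0]
    have h2 : v ⬝ᵥ somborMatrix n G p *ᵥ v ≤ w ⬝ᵥ somborMatrix n G p *ᵥ w :=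
      myQuad_abs hSnonneg v
    have h3 : w ⬝ᵥ somborMatrix n G p *ᵥ w
        ≤ w ⬝ᵥ ((c * (G.maxDegree : ℝ)) • G.adjMatrix ℝ) *ᵥ w :=
      myQuad_mono hup (fun i => abs_nonneg _)
    have h4 : w ⬝ᵥ G.adjMatrix ℝ *ᵥ w ≤ μ₁ * (w ⬝ᵥ w) := myRayleigh_le _ hA hμmax w
    have h5 : w ⬝ᵥ w = 1 := by rw [hw, habsdot v, hnorm]
    calc ξ₁ = v ⬝ᵥ somborMatrix n G p *ᵥ v := h1
      _ ≤ w ⬝ᵥ ((c * (G.maxDegree : ℝ)) • G.adjMatrix ℝ) *ᵥ w := le_trans h2 h3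
      _ = c * (G.maxDegree : ℝ) * (w ⬝ᵥ G.adjMatrix ℝ *ᵥ w) := hsmul_quad _ _
      _ ≤ c * (G.maxDegree : ℝ) * (μ₁ * (w ⬝ᵥ w)) :=
          mul_le_mul_of_nonneg_left h4 (by positivity)
      _ = c * (G.maxDegree : ℝ) * μ₁ := by rw [h5, mul_one]
  -- lower bound
  have hlower : c * (G.minDegree : ℝ) * μ₁ ≤ ξ₁ := by
    obtain ⟨hq, hnorm⟩ := myEig_self _ hA j0
    set u : Fin n → ℝ := ⇑(hA.eigenvectorBasis j0) with hu
    set w : Fin n → ℝ := fun i => |u i| with hw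
    have h5 : w ⬝ᵥ w = 1 := by rw [hw, habsdot u, hnorm]
    calc c * (G.minDegree : ℝ) * μ₁
        = c * (G.minDegree : ℝ) * (u ⬝ᵥ G.adjMatrix ℝ *ᵥ u) := by rw [hq, hj0]
      _ ≤ c * (G.minDegree : ℝ) * (w ⬝ᵥ G.adjMatrix ℝ *ᵥ w) :=
          mul_le_mul_of_nonneg_left (myQuad_abs hAnonneg u) (by positivity)
      _ = w ⬝ᵥ ((c * (G.minDegree : ℝ)) • G.adjMatrix ℝ) *ᵥ w := (hsmul_quad _ _).symm
      _ ≤ w ⬝ᵥ somborMatrix n G p *ᵥ w := myQuad_mono hlo (fun i => abs_nonneg _)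
      _ ≤ ξ₁ * (w ⬝ᵥ w) := myRayleigh_le _ hS hξmax w
      _ = ξ₁ := by rw [h5, mul_one]
  refine ⟨⟨hlower, hupper⟩, ?_⟩
  rintro ⟨k, hk⟩
  have hmin : G.minDegree = k := by
    obtain ⟨v, hv⟩ := G.exists_minimal_degree_vertex
    rw [hv, hk v]
  have hmax : G.maxDegree = k := by
    obtain ⟨v, hv⟩ := G.exists_maximal_degree_vertex
    rw [hv, hk v]
  have heq : (G.minDegree : ℝ) = (G.maxDegree : ℝ) := by rw [hmin, hmax]
  constructor
  · exact le_antisymm hlower (by rw [heq]; exact hupper)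
  · exact le_antisymm hupper (by rw [← heq]; exact hlower)
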